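/- Let α > 1 and let (a_j)_{j ≥ -1} be a sequence of nonnegative reals such that A := sup_j a_j and B := sup_j (j+2)^α a_j are both finite and A > 0. Then ∑_{j ≥ -1} a_j ≤ C · A^{1-1/α} · B^{1/α}, where C > 0 is a constant depending only on α. -/

import Mathlib

open Finset Real

/-- Bernoulli-type step: for `c ≥ 1`, `(α-1)(c+1)^(-α) ≤ c^(1-α) - (c+1)^(1-α)`. -/
lemma step_ineq (α : ℝ) (hα : 1 < α) (c : ℝ) (hc : 1 ≤ c) :
    (α - 1) * (c + 1) ^ (-α) ≤ c ^ (1 - α) - (c + 1) ^ (1 - α) := by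
  have hc0 : (0:ℝ) < c := lt_of_lt_of_le one_pos hc
  have hc10 : (0:ℝ) < c + 1 := by linarith
  set y : ℝ := 1 / (c + 1) with hy
  have hy0 : 0 < y := by positivity
  have hy2 : y ≤ 1/2 := by
    rw [hy, div_le_div_iff₀ hc10 (by norm_num)]
    linarith
  have h1my : 1 - y = c / (c + 1) := by
    rw [hy]
    field_simp
    ring
  have h1my0 : 0 < 1 - y := by
    rw [h1my]; positivity
  -- Key claim: (1 - y)^(1-α) ≥ 1 + (α-1)*y
  have key : 1 + (α - 1) * y ≤ (1 - y) ^ (1 - α) := by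
    have hinv : (1 - y) ^ (1 - α) = ((1 - y) ^ (α - 1))⁻¹ := by
      rw [← Real.rpow_neg h1my0.le]; ring_nf
    have h2pos : (0:ℝ) < (1 - y) ^ (α - 1) := Real.rpow_pos_of_pos h1my0 _
    rcases le_or_gt 2 α with h2 | h2
    · -- α ≥ 2 : use Bernoulli with exponent α - 1 ≥ 1 on (1-y)⁻¹ = 1 + y/(1-y)
      have hs : (1 - y)⁻¹ = 1 + y / (1 - y) := by
        field_simp
        ring
      have hb := one_add_mul_self_le_rpow_one_add
        (s := y / (1 - y)) (le_trans (by norm_num : (-1:ℝ) ≤ 0) (by positivity))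
        (p := α - 1) (by linarith)
      rw [← hs] at hb
      have hyle : y ≤ y / (1 - y) := by
        rw [le_div_iff₀ h1my0]
        nlinarith
      have h3 : 1 + (α - 1) * y ≤ 1 + (α - 1) * (y / (1 - y)) := by
        nlinarith
      refine h3.trans (hb.trans ?_)
      rw [hinv, ← Real.inv_rpow h1my0.le]
    · -- 1 < α < 2 : use reverse Bernoulli with exponent α - 1 ∈ (0,1)
      have hb := rpow_one_add_le_one_add_mul_self
        (s := -y) (by linarith) (p := α - 1) (by linarith) (by linarith)
      have hb' : (1 - y) ^ (α - 1) ≤ 1 - (α - 1) * y := by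
        have he : (1 : ℝ) + -y = 1 - y := by ring
        rw [he] at hb
        nlinarith [hb]
      rw [hinv, ← one_div, le_div_iff₀ h2pos]
      nlinarith [mul_le_mul_of_nonneg_left hb'
        (by nlinarith : (0:ℝ) ≤ 1 + (α - 1) * y), sq_nonneg ((α - 1) * y)]
  -- Now multiply through by (c+1)^(1-α)
  have hsplit : c ^ (1 - α) = (1 - y) ^ (1 - α) * (c + 1) ^ (1 - α) := by
    rw [h1my, ← Real.mul_rpow (by positivity) hc10.le]
    congr 1
    field_simp
  have hpow : (c + 1) ^ (-α) = (c + 1) ^ (1 - α) * y := by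
    rw [hy, show (-α) = (1 - α) + (-1) from by ring,
      Real.rpow_add hc10, Real.rpow_neg_one, one_div]
  have hP : (0:ℝ) < (c + 1) ^ (1 - α) := Real.rpow_pos_of_pos hc10 _
  rw [hsplit, hpow]
  nlinarith [mul_le_mul_of_nonneg_right key hP.le]

/-- Tail bound: partial sums of `(n+N+1)^(-α)` are bounded by `(α-1)⁻¹ N^(1-α)`. -/
lemma tail_bound (α : ℝ) (hα : 1 < α) (N : ℕ) (hN : 1 ≤ N) (M : ℕ) :
    ∑ n ∈ range M, ((n : ℝ) + N + 1) ^ (-α) ≤ (α - 1)⁻¹ * (N : ℝ) ^ (1 - α) := by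
  have hα1 : (0:ℝ) < α - 1 := by linarith
  have key : ∀ M : ℕ, (α - 1) * ∑ n ∈ range M, ((n : ℝ) + N + 1) ^ (-α)
      ≤ (N : ℝ) ^ (1 - α) - ((M : ℝ) + N) ^ (1 - α) := by
    intro M
    induction M with
    | zero => simp
    | succ M ih =>
      rw [Finset.sum_range_succ, mul_add]
      have hstep := step_ineq α hα ((M : ℝ) + N)
        (by exact_mod_cast le_add_of_nonneg_of_le (Nat.cast_nonneg M) (by exact_mod_cast hN))
      push_cast
      rw [show ((M : ℝ) + 1 + (N : ℝ)) = ((M : ℝ) + (N : ℝ) + 1) from by ring]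
      linarith
  have h := key M
  have hnn : (0:ℝ) ≤ ((M : ℝ) + N) ^ (1 - α) :=
    Real.rpow_nonneg (by positivity) _
  have hiα : (0:ℝ) ≤ (α - 1)⁻¹ := by positivity
  calc ∑ n ∈ range M, ((n : ℝ) + N + 1) ^ (-α)
      = (α - 1)⁻¹ * ((α - 1) * ∑ n ∈ range M, ((n : ℝ) + N + 1) ^ (-α)) := by
        field_simp
    _ ≤ (α - 1)⁻¹ * ((N : ℝ) ^ (1 - α) - ((M : ℝ) + N) ^ (1 - α)) :=
        mul_le_mul_of_nonneg_left h hiα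
    _ ≤ (α - 1)⁻¹ * (N : ℝ) ^ (1 - α) :=
        mul_le_mul_of_nonneg_left (by linarith) hiα

/-- Interpolation inequality for sequences: if a_j ≤ A and (j+2)^α a_j ≤ B for j ≥ -1,
then ∑_{j ≥ -1} a_j ≤ C A^{1-1/α} B^{1/α} with C depending only on α. -/
theorem stmt1 (α : ℝ) (hα : 1 < α) :
    ∃ C > (0 : ℝ), ∀ (a : ℤ → ℝ) (A B : ℝ),
      (∀ j : ℤ, -1 ≤ j → 0 ≤ a j) → 0 < A →
      (∀ j : ℤ, -1 ≤ j → a j ≤ A) →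
      (∀ j : ℤ, -1 ≤ j → ((j : ℝ) + 2) ^ α * a j ≤ B) →
      ∑' j : {j : ℤ // -1 ≤ j}, a j ≤ C * A ^ (1 - 1 / α) * B ^ (1 / α) := by
  have hα0 : (0:ℝ) < α := by linarith
  have hia : (0:ℝ) < 1 / α := by positivity
  have hia1 : 1 / α < 1 := by
    rw [div_lt_one hα0]; linarith
  have hα1' : (0:ℝ) < α - 1 := by linarith
  refine ⟨2 + (α - 1)⁻¹, by positivity, ?_⟩
  intro a A B h0 hApos hA hB
  -- reindex over ℕ
  set b : ℕ → ℝ := fun n => a ((n : ℤ) - 1) with hbdef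
  have hmem : ∀ n : ℕ, (-1 : ℤ) ≤ (n : ℤ) - 1 := fun n => by omega
  have hb0 : ∀ n, 0 ≤ b n := fun n => h0 _ (hmem n)
  have hbA : ∀ n, b n ≤ A := fun n => hA _ (hmem n)
  have hbB : ∀ n : ℕ, ((n : ℝ) + 1) ^ α * b n ≤ B := by
    intro n
    have h := hB ((n : ℤ) - 1) (hmem n)
    have he : (((n : ℤ) - 1 : ℤ) : ℝ) + 2 = (n : ℝ) + 1 := by push_cast; ring
    rw [he] at h
    exact h
  have hone : ∀ n : ℕ, (1:ℝ) ≤ ((n : ℝ) + 1) ^ α := by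
    intro n
    exact Real.one_le_rpow (by exact_mod_cast Nat.succ_le_succ (Nat.zero_le n)) hα0.le
  have hbB' : ∀ n : ℕ, b n ≤ B / ((n : ℝ) + 1) ^ α := by
    intro n
    rw [le_div_iff₀ (by positivity : (0:ℝ) < ((n : ℝ) + 1) ^ α)]
    linarith [hbB n]
  have hB0 : 0 ≤ B := le_trans (by nlinarith [hb0 0, hone 0]) (hbB 0)
  -- reindexing equivalence
  have hts : ∑' j : {j : ℤ // -1 ≤ j}, a j = ∑' n : ℕ, b n :=
    (Equiv.tsum_eq
      (⟨fun n => ⟨(n : ℤ) - 1, hmem n⟩, fun j => (j.1 + 1).toNat,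
        fun n => by simp,
        fun j => by
          ext
          have := j.2
          simp only
          omega⟩ : ℕ ≃ {j : ℤ // -1 ≤ j})
      (fun j : {j : ℤ // -1 ≤ j} => a j)).symm
  rw [hts]
  rcases eq_or_lt_of_le hB0 with hB0' | hBpos
  · -- B = 0 case : all terms vanish
    have hz : ∀ n, b n = 0 := by
      intro n
      have h1 := hbB n
      have h2 := hb0 n
      have h3 := hone n
      nlinarith
    rw [tsum_congr hz, tsum_zero, ← hB0', Real.zero_rpow (ne_of_gt hia)]
    simp
  · -- B > 0 case
    set A' : ℝ := min A B with hA'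
    have hA'pos : 0 < A' := lt_min hApos hBpos
    have hA'B : A' ≤ B := min_le_right _ _
    have hbA' : ∀ n, b n ≤ A' := by
      intro n
      refine le_min (hbA n) ?_
      calc b n = 1 * b n := (one_mul _).symm
        _ ≤ ((n : ℝ) + 1) ^ α * b n := mul_le_mul_of_nonneg_right (hone n) (hb0 n)
        _ ≤ B := hbB n
    set t : ℝ := (B / A') ^ (1 / α) with htdef
    have hBA'1 : 1 ≤ B / A' := (one_le_div hA'pos).mpr hA'B
    have ht1 : 1 ≤ t := Real.one_le_rpow hBA'1 hia.le
    have htpos : 0 < t := lt_of_lt_of_le one_pos ht1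
    have hA'r : (0:ℝ) < A' ^ (1/α) := Real.rpow_pos_of_pos hA'pos _
    -- key identities
    have hid1 : A' * t = A' ^ (1 - 1/α) * B ^ (1/α) := by
      rw [htdef, Real.div_rpow hB0 hA'pos.le, Real.rpow_sub hA'pos, Real.rpow_one]
      field_simp
    have hid2 : B * t ^ (1 - α) = A' ^ (1 - 1/α) * B ^ (1/α) := by
      rw [htdef, ← Real.rpow_mul (by positivity) (1/α) (1 - α)]
      have hexp : 1 / α * (1 - α) = 1 / α - 1 := by
        field_simp
      rw [hexp, Real.rpow_sub (by positivity), Real.rpow_one,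
        Real.div_rpow hB0 hA'pos.le, Real.rpow_sub hA'pos, Real.rpow_one]
      have hBr : (0:ℝ) < B ^ (1/α) := Real.rpow_pos_of_pos hBpos _
      field_simp
    set N : ℕ := ⌈t⌉₊ with hNdef
    have hN1 : 1 ≤ N := Nat.one_le_ceil_iff.mpr htpos
    have htN : t ≤ (N : ℝ) := Nat.le_ceil t
    have hNt : (N : ℝ) ≤ 2 * t := by
      have h2 : (N : ℝ) < t + 1 := Nat.ceil_lt_add_one htpos.le
      linarith
    -- summability
    have hsum : Summable b := by
      apply Summable.of_nonneg_of_le hb0 hbB'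
      have h1 : Summable (fun n : ℕ => ((n : ℝ) + 1) ^ (-α)) := by
        have h0' := (Real.summable_nat_rpow (p := -α)).mpr (by linarith)
        have h2 := (summable_nat_add_iff 1).mpr h0'
        simpa using h2
      apply Summable.congr (h1.mul_left B)
      intro n
      rw [Real.rpow_neg (by positivity), div_eq_mul_inv]
    rw [← hsum.sum_add_tsum_nat_add N]
    -- head bound
    have hhead : ∑ n ∈ range N, b n ≤ 2 * (A' ^ (1 - 1/α) * B ^ (1/α)) := by
      calc ∑ n ∈ range N, b n ≤ ∑ _n ∈ range N, A' :=
            Finset.sum_le_sum (fun n _ => hbA' n)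
        _ = (N : ℝ) * A' := by rw [Finset.sum_const, card_range]; ring
        _ ≤ 2 * t * A' := mul_le_mul_of_nonneg_right hNt hA'pos.le
        _ = 2 * (A' ^ (1 - 1/α) * B ^ (1/α)) := by rw [← hid1]; ring
    -- tail bound
    have htail : ∑' n : ℕ, b (n + N) ≤ (α - 1)⁻¹ * (A' ^ (1 - 1/α) * B ^ (1/α)) := by
      have hbound : ∀ M : ℕ, ∑ n ∈ range M, b (n + N)
          ≤ (α - 1)⁻¹ * B * (N : ℝ) ^ (1 - α) := by
        intro M
        calc ∑ n ∈ range M, b (n + N)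
            ≤ ∑ n ∈ range M, B * ((n : ℝ) + N + 1) ^ (-α) := by
              apply Finset.sum_le_sum
              intro n _
              have h := hbB' (n + N)
              rw [div_eq_mul_inv] at h
              have hc : ((↑(n + N) : ℝ) + 1) = (n : ℝ) + N + 1 := by push_cast; ring
              rw [hc] at h
              rw [Real.rpow_neg (by positivity)]
              exact h
          _ = B * ∑ n ∈ range M, ((n : ℝ) + N + 1) ^ (-α) := by
              rw [Finset.mul_sum]
          _ ≤ B * ((α - 1)⁻¹ * (N : ℝ) ^ (1 - α)) :=
              mul_le_mul_of_nonneg_left (tail_bound α hα N hN1 M) hB0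
          _ = (α - 1)⁻¹ * B * (N : ℝ) ^ (1 - α) := by ring
      have h1 : ∑' n : ℕ, b (n + N) ≤ (α - 1)⁻¹ * B * (N : ℝ) ^ (1 - α) :=
        Real.tsum_le_of_sum_range_le (fun n => hb0 _) hbound
      refine h1.trans ?_
      have hrp : ((N : ℝ)) ^ (1 - α) ≤ t ^ (1 - α) :=
        Real.rpow_le_rpow_of_nonpos htpos htN (by linarith)
      calc (α - 1)⁻¹ * B * (N : ℝ) ^ (1 - α)
          ≤ (α - 1)⁻¹ * B * t ^ (1 - α) := by
            apply mul_le_mul_of_nonneg_left hrp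
            have : (0:ℝ) ≤ (α - 1)⁻¹ := by positivity
            positivity
        _ = (α - 1)⁻¹ * (A' ^ (1 - 1/α) * B ^ (1/α)) := by rw [mul_assoc, hid2]
    -- combine
    have hA'A : A' ^ (1 - 1/α) ≤ A ^ (1 - 1/α) :=
      Real.rpow_le_rpow hA'pos.le (min_le_left _ _) (by linarith)
    have hBp : 0 ≤ B ^ (1/α) := Real.rpow_nonneg hB0 _
    calc ∑ n ∈ range N, b n + ∑' n : ℕ, b (n + N)
        ≤ 2 * (A' ^ (1 - 1/α) * B ^ (1/α)) + (α - 1)⁻¹ * (A' ^ (1 - 1/α) * B ^ (1/α)) :=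
          add_le_add hhead htail
      _ = (2 + (α - 1)⁻¹) * A' ^ (1 - 1/α) * B ^ (1/α) := by ring
      _ ≤ (2 + (α - 1)⁻¹) * A ^ (1 - 1/α) * B ^ (1/α) := by
          have hc : (0:ℝ) ≤ 2 + (α - 1)⁻¹ := by positivity
          apply mul_le_mul_of_nonneg_right _ hBp
          exact mul_le_mul_of_nonneg_left hA'A hc
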